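/- arXiv:1307.1935 — 2 statements merged into one kernel-verified Lean document; each statement's English description precedes it below -/
import Mathlib

section
/- A metric space X is coarsely embeddable into Hilbert space if and only if for every R > 0 and ε > 0 there exists a map β : X → H into a Hilbert space with ‖β(x)‖ = 1 for all x, such that (1) sup{|1 − ⟨β(x), β(y)⟩| : d(x,y) ≤ R} ≤ ε, and (2) lim_{S→∞} sup{|⟨β(x), β(y)⟩| : d(x,y) ≥ S} = 0. -/
open Metric Filter
noncomputable section

/-- Uniformly discrete metric space. -/
def UniformlyDiscrete (X : Type*) [MetricSpace X] : Prop :=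
  ∃ c > (0:ℝ), ∀ x y : X, x ≠ y → c ≤ dist x y

/-- Bounded geometry: uniformly finite balls. -/
def BoundedGeometry (X : Type*) [MetricSpace X] : Prop :=
  ∀ r : ℝ, ∃ N : ℕ, ∀ x : X,
    (Metric.closedBall x r).Finite ∧ (Metric.closedBall x r).ncard ≤ N

/-- A coarse embedding of `X` into the Hilbert space `H`: there are nondecreasing
functions `ρ₋, ρ₊` tending to infinity controlling `‖φ x - φ y‖` by `dist x y`. -/
def IsCoarseEmbedding {X : Type*} [MetricSpace X] {H : Type*} [NormedAddCommGroup H]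
    (φ : X → H) : Prop :=
  ∃ ρm ρp : ℝ → ℝ, Monotone ρm ∧ Monotone ρp ∧
    Tendsto ρm atTop atTop ∧ Tendsto ρp atTop atTop ∧
    ∀ x y : X, ρm (dist x y) ≤ ‖φ x - φ y‖ ∧ ‖φ x - φ y‖ ≤ ρp (dist x y)

/-- `X` is coarsely embeddable into a Hilbert space. -/
def CoarselyEmbeddable (X : Type*) [MetricSpace X] : Prop :=
  ∃ (H : Type) (nH : NormedAddCommGroup H)
    (_ : @InnerProductSpace ℝ H _ nH.toSeminormedAddCommGroup) (φ : X → H),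
    @IsCoarseEmbedding X _ H nH φ

/-- The conditions on a unit-norm map `β : X → H` in the Dadarlat–Guentner
characterization of coarse embeddability: (1) `|1 - ⟨β x, β y⟩| ≤ ε` whenever
`dist x y ≤ R`; (2) `sup {|⟨β x, β y⟩| : dist x y ≥ S} → 0` as `S → ∞`. -/
def CEWitness {X : Type*} [MetricSpace X] {H : Type*} [NormedAddCommGroup H]
    [InnerProductSpace ℝ H] (β : X → H) (R ε : ℝ) : Prop :=
  (∀ x : X, ‖β x‖ = 1) ∧
  (∀ x y : X, dist x y ≤ R → |1 - (inner ℝ (β x) (β y) : ℝ)| ≤ ε) ∧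
  (∀ δ > (0:ℝ), ∃ S : ℝ, ∀ x y : X, S ≤ dist x y → |(inner ℝ (β x) (β y) : ℝ)| ≤ δ)


section Aux
open scoped ENNReal NNReal
set_option maxHeartbeats 1000000

variable {X : Type}

def kinner (K : X → X → ℝ) (f g : X →₀ ℝ) : ℝ :=
  ∑ x ∈ f.support, ∑ y ∈ g.support, f x * g y * K x y

lemma kinner_eq (K : X → X → ℝ) (f g : X →₀ ℝ) {s t : Finset X}
    (hs : f.support ⊆ s) (ht : g.support ⊆ t) :
    kinner K f g = ∑ x ∈ s, ∑ y ∈ t, f x * g y * K x y := by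
  unfold kinner
  rw [Finset.sum_subset hs (fun x _ hx => by
    simp [Finsupp.notMem_support_iff.mp hx])]
  exact Finset.sum_congr rfl fun x _ => Finset.sum_subset ht (fun y _ hy => by
    simp [Finsupp.notMem_support_iff.mp hy])

theorem featureMap_of_psd (K : X → X → ℝ) (hsymm : ∀ x y, K x y = K y x)
    (hpsd : ∀ (s : Finset X) (c : X → ℝ), 0 ≤ ∑ x ∈ s, ∑ y ∈ s, c x * c y * K x y) :
    ∃ (H : Type) (nH : NormedAddCommGroup H)
      (iH : @InnerProductSpace ℝ H _ nH.toSeminormedAddCommGroup) (β : X → H),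
      ∀ x y, @inner ℝ H iH.toInner (β x) (β y) = K x y := by
  classical
  letI core : PreInnerProductSpace.Core ℝ (X →₀ ℝ) :=
    { toInner := ⟨kinner K⟩
      conj_inner_symm := fun f g => by
        show (starRingEnd ℝ) (kinner K g f) = kinner K f g
        rw [starRingEnd_apply, star_trivial]
        unfold kinner
        rw [Finset.sum_comm]
        exact Finset.sum_congr rfl fun x _ => Finset.sum_congr rfl fun y _ => by
          rw [hsymm]; ring
      re_inner_nonneg := fun f => by
        simpa [kinner] using hpsd f.support f
      add_left := fun f g h => by
        show kinner K (f + g) h = kinner K f h + kinner K g h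
        rw [kinner_eq K (f+g) h (s := f.support ∪ g.support) Finsupp.support_add (subset_refl _),
            kinner_eq K f h Finset.subset_union_left (subset_refl _),
            kinner_eq K g h Finset.subset_union_right (subset_refl _),
            ← Finset.sum_add_distrib]
        refine Finset.sum_congr rfl fun x _ => ?_
        rw [← Finset.sum_add_distrib]
        refine Finset.sum_congr rfl fun y _ => ?_
        simp only [Finsupp.add_apply]
        ring
      smul_left := fun f g r => by
        show kinner K (r • f) g = (starRingEnd ℝ) r * kinner K f g
        rw [starRingEnd_apply, star_trivial,
            kinner_eq K (r • f) g (Finsupp.support_smul) (subset_refl _), kinner,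
            Finset.mul_sum]
        refine Finset.sum_congr rfl fun x _ => ?_
        rw [Finset.mul_sum]
        refine Finset.sum_congr rfl fun y _ => ?_
        simp only [Finsupp.smul_apply, smul_eq_mul]
        ring }
  letI : SeminormedAddCommGroup (X →₀ ℝ) :=
    InnerProductSpace.Core.toSeminormedAddCommGroup (𝕜 := ℝ)
  letI ns : NormedSpace ℝ (X →₀ ℝ) := InnerProductSpace.Core.toNormedSpace (𝕜 := ℝ)
  letI ip : InnerProductSpace ℝ (X →₀ ℝ) :=
    { ns, core with
      norm_sq_eq_re_inner := fun f => by
        have h₂ : (0:ℝ) ≤ RCLike.re (kinner K f f) := core.re_inner_nonneg f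
        have h₁ : ‖f‖ ^ 2 = Real.sqrt (RCLike.re (kinner K f f)) ^ 2 := rfl
        rw [h₁, Real.sq_sqrt h₂]; rfl }
  refine ⟨SeparationQuotient (X →₀ ℝ), inferInstance, inferInstance,
    fun x => SeparationQuotient.mk (Finsupp.single x 1), fun x y => ?_⟩
  rw [SeparationQuotient.inner_mk_mk]
  show kinner K (Finsupp.single x 1) (Finsupp.single y 1) = K x y
  rw [kinner_eq K _ _ (s := {x}) (t := {y}) Finsupp.support_single_subset
      Finsupp.support_single_subset]
  simp


section Gram
variable {X : Type} {H : Type*} [NormedAddCommGroup H] [InnerProductSpace ℝ H]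

/-- A kernel admits a finite Gram representation on a finite set. -/
def HasGramRep (s : Finset X) (B : X → X → ℝ) : Prop :=
  ∃ (ι : Type) (_ : Fintype ι) (v : X → ι → ℝ),
    ∀ x ∈ s, ∀ y ∈ s, B x y = ∑ i, v x i * v y i

lemma hasGramRep_one (s : Finset X) : HasGramRep s (fun _ _ => (1:ℝ)) :=
  ⟨PUnit, inferInstance, fun _ _ => 1, fun _ _ _ _ => by simp⟩

lemma HasGramRep.mul {s : Finset X} {B B' : X → X → ℝ}
    (h : HasGramRep s B) (h' : HasGramRep s B') :
    HasGramRep s (fun x y => B x y * B' x y) := by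
  obtain ⟨ι, fι, v, hv⟩ := h
  obtain ⟨ι', fι', v', hv'⟩ := h'
  refine ⟨ι × ι', @instFintypeProd ι ι' fι fι', fun x p => v x p.1 * v' x p.2,
    fun x hx y hy => ?_⟩
  dsimp only
  rw [hv x hx y hy, hv' x hx y hy, Finset.sum_mul_sum]
  rw [← Finset.sum_product']
  refine Finset.sum_congr rfl fun p _ => by ring

lemma hasGramRep_inner (s : Finset X) (u : X → H) :
    HasGramRep s (fun x y => (inner ℝ (u x) (u y) : ℝ)) := by
  classical
  set W : Submodule ℝ H := Submodule.span ℝ (↑(s.image u) : Set H) with hW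
  haveI : FiniteDimensional ℝ W := FiniteDimensional.span_finset ℝ _
  set b := stdOrthonormalBasis ℝ W
  refine ⟨Fin (Module.finrank ℝ W), inferInstance,
    fun x i => (inner ℝ ((b i : W) : H) (u x) : ℝ), fun x hx y hy => ?_⟩
  have hux : u x ∈ W := Submodule.subset_span (by simp [Finset.mem_image]; exact ⟨x, hx, rfl⟩)
  have huy : u y ∈ W := Submodule.subset_span (by simp [Finset.mem_image]; exact ⟨y, hy, rfl⟩)
  have key := b.sum_inner_mul_inner (⟨u x, hux⟩ : W) (⟨u y, huy⟩ : W)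
  have h1 : (inner ℝ (⟨u x, hux⟩ : W) (⟨u y, huy⟩ : W) : ℝ) = inner ℝ (u x) (u y) := rfl
  rw [h1] at key
  dsimp only
  rw [← key]
  refine Finset.sum_congr rfl fun i _ => ?_
  have h2 : (inner ℝ (⟨u x, hux⟩ : W) (b i) : ℝ) = inner ℝ (u x) ((b i : W) : H) := rfl
  have h3 : (inner ℝ (b i) (⟨u y, huy⟩ : W) : ℝ) = inner ℝ ((b i : W) : H) (u y) := rfl
  rw [h2, h3, real_inner_comm (u x)]

lemma HasGramRep.pow {s : Finset X} {B : X → X → ℝ} (h : HasGramRep s B) (k : ℕ) :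
    HasGramRep s (fun x y => B x y ^ k) := by
  induction k with
  | zero => simpa using hasGramRep_one s
  | succ k ih =>
      have := ih.mul h
      simpa [pow_succ] using this

lemma HasGramRep.sum_nonneg {s : Finset X} {B : X → X → ℝ} (h : HasGramRep s B)
    (d : X → ℝ) : 0 ≤ ∑ x ∈ s, ∑ y ∈ s, d x * d y * B x y := by
  obtain ⟨ι, fι, v, hv⟩ := h
  have e : ∑ x ∈ s, ∑ y ∈ s, d x * d y * B x y
      = ∑ i : ι, (∑ x ∈ s, d x * v x i) ^ 2 := by
    calc ∑ x ∈ s, ∑ y ∈ s, d x * d y * B x y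
        = ∑ x ∈ s, ∑ i : ι, ∑ y ∈ s, (d x * v x i) * (d y * v y i) := by
          refine Finset.sum_congr rfl fun x hx => ?_
          rw [Finset.sum_comm]
          refine Finset.sum_congr rfl fun y hy => ?_
          rw [hv x hx y hy, Finset.mul_sum]
          exact Finset.sum_congr rfl fun i _ => by ring
      _ = ∑ i : ι, ∑ x ∈ s, ∑ y ∈ s, (d x * v x i) * (d y * v y i) := Finset.sum_comm
      _ = ∑ i : ι, (∑ x ∈ s, d x * v x i) ^ 2 := by
          refine Finset.sum_congr rfl fun i _ => ?_
          rw [← Finset.sum_mul_sum, sq]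
  rw [e]
  exact Finset.sum_nonneg fun i _ => sq_nonneg _
end Gram

section Gaussian
variable {X : Type} {H : Type*} [NormedAddCommGroup H] [InnerProductSpace ℝ H]

lemma real_exp_tsum (z : ℝ) : Real.exp z = ∑' n : ℕ, z ^ n / (Nat.factorial n : ℝ) := by
  rw [Real.exp_eq_exp_ℝ, NormedSpace.exp_eq_tsum_div]

lemma gaussian_psd (t : ℝ) (ht : 0 ≤ t) (u : X → H) (s : Finset X) (c : X → ℝ) :
    0 ≤ ∑ x ∈ s, ∑ y ∈ s, c x * c y * Real.exp (-t * ‖u x - u y‖ ^ 2) := by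
  set d : X → ℝ := fun z => c z * Real.exp (-t * ‖u z‖ ^ 2) with hd
  have hterm : ∀ x y : X, c x * c y * Real.exp (-t * ‖u x - u y‖ ^ 2)
      = d x * d y * Real.exp (2 * t * (inner ℝ (u x) (u y) : ℝ)) := by
    intro x y
    rw [hd]; dsimp only
    rw [norm_sub_sq_real, show -t * (‖u x‖ ^ 2 - 2 * (inner ℝ (u x) (u y) : ℝ) + ‖u y‖ ^ 2)
        = (-t * ‖u x‖ ^ 2) + ((-t * ‖u y‖ ^ 2) + (2 * t * (inner ℝ (u x) (u y) : ℝ))) from by ring,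
      Real.exp_add, Real.exp_add]
    ring
  simp only [hterm]
  have hsum : ∀ x y : X, Summable (fun k : ℕ =>
      d x * d y * ((2 * t * (inner ℝ (u x) (u y) : ℝ)) ^ k / (Nat.factorial k : ℝ))) :=
    fun x y => (Real.summable_pow_div_factorial _).mul_left _
  have heq : ∑ x ∈ s, ∑ y ∈ s, d x * d y * Real.exp (2 * t * (inner ℝ (u x) (u y) : ℝ))
      = ∑' k : ℕ, ∑ x ∈ s, ∑ y ∈ s,
          d x * d y * ((2 * t * (inner ℝ (u x) (u y) : ℝ)) ^ k / (Nat.factorial k : ℝ)) := by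
    calc ∑ x ∈ s, ∑ y ∈ s, d x * d y * Real.exp (2 * t * (inner ℝ (u x) (u y) : ℝ))
        = ∑ x ∈ s, ∑ y ∈ s, ∑' k : ℕ,
            d x * d y * ((2 * t * (inner ℝ (u x) (u y) : ℝ)) ^ k / (Nat.factorial k : ℝ)) := by
          simp only [real_exp_tsum, ← tsum_mul_left]
      _ = ∑ x ∈ s, ∑' k : ℕ, ∑ y ∈ s,
            d x * d y * ((2 * t * (inner ℝ (u x) (u y) : ℝ)) ^ k / (Nat.factorial k : ℝ)) :=
          Finset.sum_congr rfl fun x _ => (Summable.tsum_finsetSum fun y _ => hsum x y).symm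
      _ = ∑' k : ℕ, ∑ x ∈ s, ∑ y ∈ s,
            d x * d y * ((2 * t * (inner ℝ (u x) (u y) : ℝ)) ^ k / (Nat.factorial k : ℝ)) :=
          (Summable.tsum_finsetSum fun x _ => summable_sum fun y _ => hsum x y).symm
  rw [heq]
  refine tsum_nonneg fun k => ?_
  have h2 : ∀ x y : X, d x * d y * ((2 * t * (inner ℝ (u x) (u y) : ℝ)) ^ k / (Nat.factorial k : ℝ))
      = ((2 * t) ^ k / (Nat.factorial k : ℝ)) * (d x * d y * (inner ℝ (u x) (u y) : ℝ) ^ k) := by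
    intro x y; rw [mul_pow]; ring
  simp only [h2, ← Finset.mul_sum]
  exact mul_nonneg (by positivity) (((hasGramRep_inner s u).pow k).sum_nonneg d)
end Gaussian


lemma forward_dir (X : Type) [MetricSpace X] (h : CoarselyEmbeddable X) :
    ∀ R > (0:ℝ), ∀ ε > (0:ℝ),
      ∃ (H : Type) (nH : NormedAddCommGroup H)
        (iH : @InnerProductSpace ℝ H _ nH.toSeminormedAddCommGroup)
        (β : X → H), @CEWitness X _ H nH iH β R ε := by
  obtain ⟨H, nH, iH, φ, ρm, ρp, hρm, hρp, htm, htp, hb⟩ := h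
  intro R hR ε hε
  set t : ℝ := ε / ((ρp R) ^ 2 + 1) with htdef
  have ht : 0 < t := div_pos hε (by positivity)
  set K : X → X → ℝ := fun x y => Real.exp (-t * ‖φ x - φ y‖ ^ 2) with hK
  have hsymm : ∀ x y, K x y = K y x := by
    intro x y; rw [hK]; dsimp only; rw [norm_sub_rev]
  obtain ⟨H', nH', iH', β, hβ⟩ := featureMap_of_psd K hsymm
    (fun s c => gaussian_psd t ht.le φ s c)
  refine ⟨H', nH', iH', β, ?_, ?_, ?_⟩
  · intro x
    have h1 : (inner ℝ (β x) (β x) : ℝ) = 1 := by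
      rw [hβ, hK]; simp
    have h2 : ‖β x‖ ^ 2 = 1 := by rw [← real_inner_self_eq_norm_sq, h1]
    nlinarith [norm_nonneg (β x)]
  · intro x y hxy
    rw [hβ, hK]
    dsimp only
    set n := ‖φ x - φ y‖ with hn
    have hn0 : 0 ≤ n := norm_nonneg _
    have hnle : n ≤ ρp R := le_trans (hb x y).2 (hρp hxy)
    have hexp1 : Real.exp (-t * n ^ 2) ≤ 1 := by
      rw [← Real.exp_zero]
      exact Real.exp_le_exp.2 (by nlinarith)
    have hexp2 : 1 - Real.exp (-t * n ^ 2) ≤ t * n ^ 2 := by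
      have := Real.add_one_le_exp (-t * n ^ 2)
      linarith
    have htn : t * n ^ 2 ≤ ε := by
      have h1 : n ^ 2 ≤ (ρp R) ^ 2 + 1 := by nlinarith
      have h2 : t * n ^ 2 ≤ t * ((ρp R) ^ 2 + 1) := by nlinarith
      calc t * n ^ 2 ≤ t * ((ρp R) ^ 2 + 1) := h2
        _ = ε := by rw [htdef]; field_simp
    rw [abs_of_nonneg (by nlinarith)]
    nlinarith
  · intro δ hδ
    have h1 : Tendsto (fun r => max (ρm r) 0) atTop atTop :=
      tendsto_atTop_mono (fun r => le_max_left _ _) htm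
    have h2 : Tendsto (fun r => t * (max (ρm r) 0) ^ 2) atTop atTop := by
      apply Tendsto.const_mul_atTop ht
      exact (tendsto_pow_atTop (two_ne_zero)).comp h1
    have h3 : Tendsto (fun r => Real.exp (-(t * (max (ρm r) 0) ^ 2))) atTop (nhds 0) :=
      Real.tendsto_exp_atBot.comp (tendsto_neg_atTop_atBot.comp h2)
    obtain ⟨S, hS⟩ := (h3.eventually_lt_const hδ).exists
    refine ⟨S, fun x y hxy => ?_⟩
    rw [hβ, hK]
    dsimp only
    set n := ‖φ x - φ y‖ with hn
    have hn0 : 0 ≤ n := norm_nonneg _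
    have hge : max (ρm S) 0 ≤ n := by
      refine max_le ?_ hn0
      exact le_trans (hρm hxy) (hb x y).1
    rw [abs_of_nonneg (Real.exp_pos _).le]
    refine le_trans ?_ hS.le
    apply Real.exp_le_exp.2
    have hm0 : 0 ≤ max (ρm S) 0 := le_max_right _ _
    have := mul_le_mul_of_nonneg_left (pow_le_pow_left₀ hm0 hge 2) ht.le
    linarith

lemma tendsto_sqrt_atTop' : Tendsto Real.sqrt atTop atTop := by
  rw [Filter.tendsto_atTop]
  intro b
  filter_upwards [eventually_ge_atTop (b ^ 2)] with r hr
  calc b ≤ |b| := le_abs_self b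
    _ = Real.sqrt (b ^ 2) := (Real.sqrt_sq_eq_abs b).symm
    _ ≤ Real.sqrt r := Real.sqrt_le_sqrt hr

lemma reverse_dir (X : Type) [MetricSpace X]
    (hyp : ∀ R > (0:ℝ), ∀ ε > (0:ℝ),
      ∃ (H : Type) (nH : NormedAddCommGroup H)
        (iH : @InnerProductSpace ℝ H _ nH.toSeminormedAddCommGroup)
        (β : X → H), @CEWitness X _ H nH iH β R ε) :
    CoarselyEmbeddable X := by
  rcases isEmpty_or_nonempty X with hX | hX
  · refine ⟨ℝ, inferInstance, inferInstance, fun _ => 0, id, id, monotone_id, monotone_id,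
      tendsto_id, tendsto_id, fun x => hX.elim x⟩
  obtain ⟨x₀⟩ := hX
  choose H nH iH β hβ using fun n : ℕ =>
    hyp ((n : ℝ) + 1) (by positivity) ((2:ℝ)⁻¹ ^ n) (by positivity)
  letI : ∀ n, NormedAddCommGroup (H n) := nH
  letI : ∀ n, InnerProductSpace ℝ (H n) := iH
  choose S hS using fun n : ℕ => (hβ n).2.2 (1/2) (by norm_num)
  set g : ℕ → X → X → ℝ := fun n x y => ‖β n x - β n y‖ ^ 2 with hg
  have hnorm1 : ∀ n x, ‖β n x‖ = 1 := fun n => (hβ n).1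
  have hge : ∀ n x y, g n x y = 2 - 2 * (inner ℝ (β n x) (β n y) : ℝ) := by
    intro n x y
    rw [hg]; dsimp only
    rw [norm_sub_sq_real, hnorm1, hnorm1]
    ring
  have hg0 : ∀ n x y, 0 ≤ g n x y := fun n x y => sq_nonneg _
  have hg4 : ∀ n x y, g n x y ≤ 4 := by
    intro n x y
    have h1 : (inner ℝ (β n x) (β n y) : ℝ) ≤ 1 := by
      have := real_inner_le_norm (β n x) (β n y)
      rwa [hnorm1, hnorm1, one_mul] at this
    have h2 : |(inner ℝ (β n x) (β n y) : ℝ)| ≤ 1 := by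
      have := abs_real_inner_le_norm (β n x) (β n y)
      rwa [hnorm1, hnorm1, one_mul] at this
    rw [hge]
    have := abs_le.1 h2
    linarith [this.1]
  have hnear : ∀ (n : ℕ) (x y : X), dist x y ≤ (n : ℝ) + 1 → g n x y ≤ 2 * (2:ℝ)⁻¹ ^ n := by
    intro n x y hd
    have h1 := (hβ n).2.1 x y hd
    have h2 := (abs_le.1 h1).2
    rw [hge]
    linarith
  have hfar : ∀ (n : ℕ) (x y : X), S n ≤ dist x y → 1 ≤ g n x y := by
    intro n x y hd
    have h1 := (abs_le.1 (hS n x y hd)).2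
    rw [hge]
    linarith
  -- summability
  have hsummable : ∀ x y : X, Summable (fun n => g n x y) := by
    intro x y
    set N := ⌈dist x y⌉₊ with hN
    rw [← summable_nat_add_iff N]
    have hbound : Summable (fun n : ℕ => 2 * (2:ℝ)⁻¹ ^ (n + N)) := by
      simp_rw [pow_add]
      exact ((summable_geometric_of_lt_one (by norm_num) (by norm_num)).mul_right _).mul_left _
    refine Summable.of_nonneg_of_le (g := fun n => g (n + N) x y)
      (f := fun n : ℕ => 2 * (2:ℝ)⁻¹ ^ (n + N)) (fun n => hg0 _ _ _) (fun n => ?_) hbound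
    refine hnear _ x y ?_
    have h5 : dist x y ≤ (N : ℝ) := Nat.le_ceil _
    have h6 : (N : ℝ) ≤ ((n + N : ℕ) : ℝ) := Nat.cast_le.2 (Nat.le_add_left N n)
    push_cast at h6 ⊢
    linarith
  have hmem : ∀ x : X, Memℓp (fun n => β n x - β n x₀) 2 := by
    intro x
    apply memℓp_gen
    have h2 : (2 : ℝ≥0∞).toReal = 2 := by norm_num
    rw [h2]
    have : (fun n => ‖β n x - β n x₀‖ ^ (2:ℝ)) = fun n => g n x x₀ := by
      funext n
      rw [hg]
      dsimp only
      rw [← Real.rpow_natCast ‖β n x - β n x₀‖ 2]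
      norm_num
    rw [this]
    exact hsummable x x₀
  set φ : X → lp H 2 := fun x => ⟨fun n => β n x - β n x₀, hmem x⟩ with hφ
  have hcoords : ∀ x y : X, ∀ n, (↑(φ x - φ y) : ∀ n, H n) n = β n x - β n y := by
    intro x y n
    rw [lp.coeFn_sub]
    simp only [Pi.sub_apply]
    show (β n x - β n x₀) - (β n y - β n x₀) = β n x - β n y
    abel
  have hnormsq : ∀ x y : X, ‖φ x - φ y‖ ^ 2 = ∑' n, g n x y := by
    intro x y
    have h1 := lp.norm_rpow_eq_tsum (p := 2) (by norm_num) (φ x - φ y)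
    have h2 : (2 : ℝ≥0∞).toReal = 2 := by norm_num
    rw [h2] at h1
    calc ‖φ x - φ y‖ ^ 2 = ‖φ x - φ y‖ ^ (2:ℝ) := by
          rw [← Real.rpow_natCast ‖φ x - φ y‖ 2]; norm_num
      _ = ∑' n, ‖(↑(φ x - φ y) : ∀ n, H n) n‖ ^ (2:ℝ) := h1
      _ = ∑' n, g n x y := by
          refine tsum_congr fun n => ?_
          rw [hcoords x y n, hg]
          dsimp only
          rw [← Real.rpow_natCast ‖β n x - β n y‖ 2]
          norm_num
  -- the counting function for the lower bound
  classical
  set T : ℕ → ℝ := fun n => max (S n) n with hT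
  set cnt : ℝ → ℕ := fun r => ((Finset.range (⌊r⌋₊ + 1)).filter (fun n => T n ≤ r)).card
    with hcnt
  have hcnt_mono : Monotone cnt := by
    intro r r' hrr
    apply Finset.card_le_card
    intro n hn
    rw [Finset.mem_filter, Finset.mem_range] at hn ⊢
    refine ⟨?_, le_trans hn.2 hrr⟩
    have h1 : (n : ℝ) ≤ T n := le_max_right _ _
    have h2 : (n : ℝ) ≤ r' := le_trans h1 (le_trans hn.2 hrr)
    have := Nat.le_floor h2
    omega
  have hcnt_tendsto : Tendsto cnt atTop atTop := by
    rw [Filter.tendsto_atTop]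
    intro m
    set r₀ : ℕ := (Finset.range m).sup (fun n => ⌈max (T n) 0⌉₊) with hr₀
    filter_upwards [eventually_ge_atTop (r₀ : ℝ)] with r hr
    have hsub : Finset.range m ⊆ (Finset.range (⌊r⌋₊ + 1)).filter (fun n => T n ≤ r) := by
      intro n hn
      rw [Finset.mem_range] at hn
      have h1 : T n ≤ r := by
        have h2 : T n ≤ (⌈max (T n) 0⌉₊ : ℝ) := le_trans (le_max_left _ _) (Nat.le_ceil _)
        have h3 : (⌈max (T n) 0⌉₊ : ℝ) ≤ (r₀ : ℝ) := by
          rw [hr₀]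
          exact_mod_cast Finset.le_sup (f := fun k => ⌈max (T k) 0⌉₊) (Finset.mem_range.2 hn)
        linarith
      rw [Finset.mem_filter, Finset.mem_range]
      refine ⟨?_, h1⟩
      have h4 : (n : ℝ) ≤ r := le_trans (le_max_right _ _) h1
      have := Nat.le_floor h4
      omega
    calc m = (Finset.range m).card := (Finset.card_range m).symm
      _ ≤ cnt r := Finset.card_le_card hsub
  -- lower bound kernel fact
  have hlow : ∀ x y : X, (cnt (dist x y) : ℝ) ≤ ‖φ x - φ y‖ ^ 2 := by
    intro x y
    rw [hnormsq]
    set F := (Finset.range (⌊dist x y⌋₊ + 1)).filter (fun n => T n ≤ dist x y) with hF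
    have h1 : (cnt (dist x y) : ℝ) = ∑ n ∈ F, (1:ℝ) := by
      simp [hcnt, hF]
    rw [h1]
    refine le_trans (Finset.sum_le_sum (fun n hn => ?_)) (Summable.sum_le_tsum F
      (fun n _ => hg0 n x y) (hsummable x y))
    rw [hF, Finset.mem_filter] at hn
    exact hfar n x y (le_trans (le_max_left _ _) hn.2)
  -- upper bound
  have hupp : ∀ x y : X, ‖φ x - φ y‖ ^ 2 ≤ 4 * dist x y + 8 := by
    intro x y
    rw [hnormsq]
    set N := ⌈dist x y⌉₊ with hN
    rw [← Summable.sum_add_tsum_nat_add N (hsummable x y)]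
    have h1 : ∑ n ∈ Finset.range N, g n x y ≤ 4 * N := by
      calc ∑ n ∈ Finset.range N, g n x y ≤ ∑ n ∈ Finset.range N, 4 :=
            Finset.sum_le_sum fun n _ => hg4 n x y
        _ = 4 * N := by rw [Finset.sum_const, Finset.card_range]; ring
    have h2 : ∑' n, g (n + N) x y ≤ 4 := by
      have hb : ∀ n : ℕ, g (n + N) x y ≤ 2 * (2:ℝ)⁻¹ ^ n := by
        intro n
        refine le_trans (hnear (n + N) x y ?_) ?_
        · have hdn : dist x y ≤ (N : ℝ) := Nat.le_ceil _
          have : (N : ℝ) ≤ ((n + N : ℕ) : ℝ) := Nat.cast_le.2 (Nat.le_add_left N n)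
          push_cast at this ⊢
          linarith
        · have : (2:ℝ)⁻¹ ^ (n + N) ≤ (2:ℝ)⁻¹ ^ n := by
            apply pow_le_pow_of_le_one (by norm_num) (by norm_num)
            omega
          linarith
      calc ∑' n, g (n + N) x y ≤ ∑' n : ℕ, 2 * (2:ℝ)⁻¹ ^ n := by
            refine Summable.tsum_le_tsum hb ((summable_nat_add_iff N).2 (hsummable x y)) ?_
            exact (summable_geometric_of_lt_one (by norm_num) (by norm_num)).mul_left _
        _ = 2 * ∑' n : ℕ, (2:ℝ)⁻¹ ^ n := tsum_mul_left
        _ = 4 := by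
            rw [tsum_geometric_of_lt_one (by norm_num) (by norm_num)]
            norm_num
    have h3 : (N : ℝ) ≤ dist x y + 1 := le_of_lt (Nat.ceil_lt_add_one dist_nonneg)
    linarith
  -- assemble the embedding
  refine ⟨lp H 2, inferInstance, inferInstance, φ,
    fun r => Real.sqrt (cnt r), fun r => Real.sqrt (4 * r + 8), ?_, ?_, ?_, ?_, ?_⟩
  · exact fun a b hab => Real.sqrt_le_sqrt (Nat.cast_le.2 (hcnt_mono hab))
  · exact fun a b hab => Real.sqrt_le_sqrt (by linarith)
  · have h1 : Tendsto (fun r => ((cnt r : ℝ))) atTop atTop :=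
      tendsto_natCast_atTop_atTop.comp hcnt_tendsto
    exact tendsto_sqrt_atTop'.comp h1
  · have h2 : Tendsto (fun r : ℝ => 4 * r + 8) atTop atTop :=
      (tendsto_id.const_mul_atTop (by norm_num)).atTop_add tendsto_const_nhds
    exact tendsto_sqrt_atTop'.comp h2
  · intro x y
    constructor
    · rw [show ‖φ x - φ y‖ = Real.sqrt (‖φ x - φ y‖ ^ 2) from
        (Real.sqrt_sq (norm_nonneg _)).symm]
      exact Real.sqrt_le_sqrt (hlow x y)
    · rw [show ‖φ x - φ y‖ = Real.sqrt (‖φ x - φ y‖ ^ 2) from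
        (Real.sqrt_sq (norm_nonneg _)).symm]
      exact Real.sqrt_le_sqrt (hupp x y)

end Aux

set_option maxHeartbeats 1000000 in
/-- Dadarlat–Guentner characterization of coarse embeddability. -/
theorem coarselyEmbeddable_iff_CEWitness (X : Type) [MetricSpace X]
    (hud : UniformlyDiscrete X) (hbg : BoundedGeometry X) :
    CoarselyEmbeddable X ↔
      ∀ R > (0:ℝ), ∀ ε > (0:ℝ),
        ∃ (H : Type) (nH : NormedAddCommGroup H)
          (iH : @InnerProductSpace ℝ H _ nH.toSeminormedAddCommGroup)
          (β : X → H), @CEWitness X _ H nH iH β R ε := by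
  exact ⟨fun h => forward_dir X h, fun h => reverse_dir X h⟩

end
end

section
/- Let (X,d) be a metric space and {φ_i : X → Y_i}_{i=1}^n an exact family of maps. If the family of preimages {φ_i⁻¹(w) : w ∈ Y_i, i = 1,…,n} (each viewed as a metric subspace of X) is equi-exact, then X has property A. -/
open Metric Filter
noncomputable section

/-- The witness conditions for property A (Tu's characterization). -/
def PropertyAWitness {X : Type*} [MetricSpace X] {H : Type*} [NormedAddCommGroup H]
    [InnerProductSpace ℝ H] (α : X → H) (R ε S : ℝ) : Prop :=
  (∀ x : X, ‖α x‖ = 1) ∧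
  (∀ x y : X, dist x y ≤ R → |1 - (inner ℝ (α x) (α y) : ℝ)| < ε) ∧
  (∀ x y : X, S ≤ dist x y → (inner ℝ (α x) (α y) : ℝ) = 0)

/-- Property A (Tu's characterization, with a general Hilbert space). -/
def PropertyA (X : Type*) [MetricSpace X] : Prop :=
  ∀ R > (0:ℝ), ∀ ε > (0:ℝ),
    ∃ (H : Type) (nH : NormedAddCommGroup H)
      (iH : @InnerProductSpace ℝ H _ nH.toSeminormedAddCommGroup)
      (α : X → H) (S : ℝ), S > 0 ∧ @PropertyAWitness X _ H nH iH α R ε S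

/-- An exact family of maps `φ i : X → Y i`: for all `R, ε > 0` there are `S > 0`
and a unit-norm map `ξ : X → ℓ²(⊔ᵢ Yᵢ)` which varies by at most `ε` over distance
`R`, and with `supp ξ x ⊆ ∪ᵢ φᵢ(B_S(x))`. -/
def ExactFamily {X : Type*} [MetricSpace X] {n : ℕ} {Y : Fin n → Type*}
    (φ : ∀ i, X → Y i) : Prop :=
  ∀ R > (0:ℝ), ∀ ε > (0:ℝ), ∃ S : ℝ, S > 0 ∧
    ∃ ξ : X → lp (fun _ : (Σ i, Y i) => ℝ) 2,
      (∀ x : X, ‖ξ x‖ = 1) ∧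
      (∀ x y : X, dist x y ≤ R → ‖ξ x - ξ y‖ ≤ ε) ∧
      (∀ (x : X) (w : Σ i, Y i), ξ x w ≠ 0 → ∃ z : X, dist x z < S ∧ φ w.1 z = w.2)

/-- Witness conditions for equi-exactness of a family of subsets of `X`. -/
def EquiExactWitness {X : Type*} [MetricSpace X] {I : Type*} (A : I → Set X)
    (H : Type*) [NormedAddCommGroup H] [InnerProductSpace ℝ H]
    (ξ : ∀ j, A j → H) (R ε S : ℝ) : Prop :=
  (∀ (j : I) (x : A j), ‖ξ j x‖ = 1) ∧
  (∀ (j : I) (x y : A j), dist (x : X) (y : X) ≤ R → ‖ξ j x - ξ j y‖ ≤ ε) ∧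
  (∀ (j : I) (x y : A j), S ≤ dist (x : X) (y : X) → (inner ℝ (ξ j x) (ξ j y) : ℝ) = 0)

/-- A family of subsets of `X`, each with the induced metric, is equi-exact. -/
def EquiExact {X : Type*} [MetricSpace X] {I : Type*} (A : I → Set X) : Prop :=
  ∀ R > (0:ℝ), ∀ ε > (0:ℝ),
    ∃ (H : Type) (nH : NormedAddCommGroup H)
      (iH : @InnerProductSpace ℝ H _ nH.toSeminormedAddCommGroup)
      (ξ : ∀ j, A j → H) (S : ℝ), S > 0 ∧
      @EquiExactWitness X _ I A H nH iH ξ R ε S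


set_option maxHeartbeats 2000000 in
/-- If `{φ i}` is an exact family of maps and the preimages `φ i ⁻¹' {w}` form an
equi-exact family of metric subspaces, then `X` has property A. -/
theorem propertyA_of_exactFamily_of_equiExact (X : Type) [MetricSpace X]
    {n : ℕ} {Y : Fin n → Type} (φ : ∀ i, X → Y i)
    (hexact : ExactFamily φ)
    (hequi : EquiExact (fun p : Σ i, Y i => φ p.1 ⁻¹' {p.2})) :
    PropertyA X := by
  intro R hR ε hε
  set ε1 := Real.sqrt ε / 2 with hε1def
  have hε1 : (0:ℝ) < ε1 := by positivity
  have hε1sq : ε1 ^ 2 = ε / 4 := by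
    rw [hε1def, div_pow, Real.sq_sqrt hε.le]; norm_num
  obtain ⟨S1, hS1, ξ, hξnorm, hξvar, hξsupp⟩ := hexact R hR ε1 hε1
  obtain ⟨H, nH, iH, η, S2, hS2, hwit⟩ := hequi (R + 2 * S1) (by positivity) ε1 hε1
  letI := nH; letI := iH
  obtain ⟨hηnorm, hηvar, hηorth⟩ := hwit
  choose z hzd hzφ using hξsupp
  let f : X → ∀ _ : Σ i, Y i, H := fun x w =>
    if h : ξ x w ≠ 0 then ξ x w • η w ⟨z x w h, hzφ x w h⟩ else 0
  have fnorm : ∀ x w, ‖f x w‖ = ‖ξ x w‖ := by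
    intro x w
    by_cases h : ξ x w ≠ 0
    · simp only [f, dif_pos h, norm_smul, hηnorm, mul_one]
    · push_neg at h
      simp [f, h]
  have hmem : ∀ x, Memℓp (f x) 2 := by
    intro x
    apply memℓp_gen
    have := (lp.memℓp (ξ x)).summable (p := 2) (by norm_num)
    simpa [fnorm] using this
  let α : X → lp (fun _ : Σ i, Y i => H) 2 := fun x => ⟨f x, hmem x⟩
  have hcoe : ∀ x w, (α x) w = f x w := fun _ _ => rfl
  -- squared norms of scalar lp elements
  have hsq : ∀ u : lp (fun _ : Σ i, Y i => ℝ) 2, ∑' w, ‖u w‖ ^ 2 = ‖u‖ ^ 2 := by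
    intro u
    rw [← real_inner_self_eq_norm_sq, lp.inner_eq_tsum]
    refine tsum_congr fun w => ?_
    rw [real_inner_self_eq_norm_sq]
  have hsqsum : ∀ u : lp (fun _ : Σ i, Y i => ℝ) 2, Summable fun w => ‖u w‖ ^ 2 := by
    intro u
    have := (lp.memℓp u).summable (p := 2) (by norm_num)
    simpa using this
  -- norm one
  have hαnorm : ∀ x, ‖α x‖ = 1 := by
    intro x
    have h1 : (inner ℝ (α x) (α x) : ℝ) = (inner ℝ (ξ x) (ξ x) : ℝ) := by
      rw [lp.inner_eq_tsum, lp.inner_eq_tsum]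
      refine tsum_congr fun w => ?_
      rw [real_inner_self_eq_norm_sq, real_inner_self_eq_norm_sq, hcoe, fnorm]
    have h2 : ‖α x‖ ^ 2 = ‖ξ x‖ ^ 2 := by
      rw [← real_inner_self_eq_norm_sq, ← real_inner_self_eq_norm_sq, h1]
    have h3 := hξnorm x
    nlinarith [norm_nonneg (α x)]
  -- orthogonality
  have horth : ∀ x y : X, 2 * S1 + S2 ≤ dist x y → (inner ℝ (α x) (α y) : ℝ) = 0 := by
    intro x y hd
    rw [lp.inner_eq_tsum]
    have : ∀ w, (inner ℝ ((α x) w) ((α y) w) : ℝ) = 0 := by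
      intro w
      rw [hcoe, hcoe]
      by_cases hx : ξ x w ≠ 0
      · by_cases hy : ξ y w ≠ 0
        · simp only [f, dif_pos hx, dif_pos hy, real_inner_smul_left, real_inner_smul_right]
          have hxz := hzd x w hx
          have hyz := hzd y w hy
          have htri : dist x y ≤ dist x (z x w hx) + dist (z x w hx) (z y w hy)
              + dist (z y w hy) y := dist_triangle4 _ _ _ _
          have hdz : S2 ≤ dist (z x w hx) (z y w hy) := by
            have := dist_comm (z y w hy) y
            linarith [dist_comm y (z y w hy)]
          rw [hηorth w ⟨z x w hx, hzφ x w hx⟩ ⟨z y w hy, hzφ y w hy⟩ hdz]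
          ring
        · push_neg at hy
          simp [f, hy]
      · push_neg at hx
        simp [f, hx]
    simp only [this]
    exact tsum_zero
  -- closeness
  have hclose : ∀ x y : X, dist x y ≤ R → |1 - (inner ℝ (α x) (α y) : ℝ)| < ε := by
    intro x y hxy
    set g : (Σ i, Y i) → ℝ := fun w => ξ x w * ξ y w with hgdef
    set t : (Σ i, Y i) → ℝ := fun w => (inner ℝ (f x w) (f y w) : ℝ) with htdef
    have hgsum : Summable g := by
      have := lp.summable_inner (𝕜 := ℝ) (ξ x) (ξ y)
      simpa [RCLike.inner_apply, conj_trivial, hgdef, mul_comm] using this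
    have htsum : Summable t := lp.summable_inner (𝕜 := ℝ) (α x) (α y)
    have hinnerξ : (inner ℝ (ξ x) (ξ y) : ℝ) = ∑' w, g w := by
      rw [lp.inner_eq_tsum]
      exact tsum_congr fun w => by simp [RCLike.inner_apply, conj_trivial, hgdef, mul_comm]
    have hinnerα : (inner ℝ (α x) (α y) : ℝ) = ∑' w, t w := lp.inner_eq_tsum _ _
    -- first piece
    have hfirst0 : ‖ξ x - ξ y‖ ^ 2 = 2 - 2 * (inner ℝ (ξ x) (ξ y) : ℝ) := by
      rw [norm_sub_sq_real, hξnorm x, hξnorm y]; ring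
    have hvξ := hξvar x y hxy
    have hξle : (inner ℝ (ξ x) (ξ y) : ℝ) ≤ 1 := by
      have := real_inner_le_norm (ξ x) (ξ y)
      rw [hξnorm x, hξnorm y] at this; linarith
    have hfirst : 0 ≤ 1 - (inner ℝ (ξ x) (ξ y) : ℝ) ∧
        1 - (inner ℝ (ξ x) (ξ y) : ℝ) ≤ ε1 ^ 2 / 2 := by
      constructor
      · linarith
      · nlinarith [norm_nonneg (ξ x - ξ y)]
    -- termwise bound for the second piece
    set b : (Σ i, Y i) → ℝ := fun w => ε1 ^ 2 / 4 * (‖ξ x w‖ ^ 2 + ‖ξ y w‖ ^ 2) with hbdef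
    have hterm : ∀ w, |g w - t w| ≤ b w := by
      intro w
      by_cases hx : ξ x w ≠ 0
      · by_cases hy : ξ y w ≠ 0
        · set c : ℝ := (inner ℝ (η w ⟨z x w hx, hzφ x w hx⟩) (η w ⟨z y w hy, hzφ y w hy⟩) : ℝ)
            with hcdef
          have ht : t w = ξ x w * (ξ y w * c) := by
            rw [htdef]
            simp only [f, dif_pos hx, dif_pos hy, real_inner_smul_left, real_inner_smul_right]
            exact mul_left_comm _ _ _
          have hdz : dist (z x w hx) (z y w hy) ≤ R + 2 * S1 := by
            have htri : dist (z x w hx) (z y w hy) ≤ dist (z x w hx) x + dist x y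
                + dist y (z y w hy) := dist_triangle4 _ _ _ _
            have h1 := hzd x w hx
            have h2 := hzd y w hy
            linarith [dist_comm (z x w hx) x, dist_comm x (z x w hx)]
          have hvar := hηvar w ⟨z x w hx, hzφ x w hx⟩ ⟨z y w hy, hzφ y w hy⟩ hdz
          have hnsq : ‖η w ⟨z x w hx, hzφ x w hx⟩ - η w ⟨z y w hy, hzφ y w hy⟩‖ ^ 2
              = 2 - 2 * c := by
            rw [norm_sub_sq_real, hηnorm, hηnorm, hcdef]; ring
          have hcle : c ≤ 1 := by
            have := real_inner_le_norm (η w ⟨z x w hx, hzφ x w hx⟩)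
              (η w ⟨z y w hy, hzφ y w hy⟩)
            rw [hηnorm, hηnorm] at this; linarith
          have hc2 : 1 - c ≤ ε1 ^ 2 / 2 := by
            nlinarith [norm_nonneg (η w ⟨z x w hx, hzφ x w hx⟩ - η w ⟨z y w hy, hzφ y w hy⟩)]
          have heq : g w - t w = ξ x w * ξ y w * (1 - c) := by
            rw [ht, hgdef]; ring
          rw [heq, abs_mul, abs_mul]
          have habs : |1 - c| ≤ ε1 ^ 2 / 2 := by
            rw [abs_of_nonneg (by linarith)]; exact hc2
          have hA : |ξ x w| * |ξ y w| ≤ (‖ξ x w‖ ^ 2 + ‖ξ y w‖ ^ 2) / 2 := by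
            rw [Real.norm_eq_abs, Real.norm_eq_abs]
            nlinarith [sq_nonneg (|ξ x w| - |ξ y w|), abs_nonneg (ξ x w), abs_nonneg (ξ y w)]
          rw [hbdef]
          have h0 : 0 ≤ |ξ x w| * |ξ y w| := by positivity
          nlinarith [abs_nonneg (1 - c), sq_nonneg ε1]
        · push_neg at hy
          have hg0 : g w = 0 := by simp [hgdef, hy]
          have ht0 : t w = 0 := by simp [htdef, f, hy]
          rw [hg0, ht0, hbdef]
          simp
          positivity
      · push_neg at hx
        have hg0 : g w = 0 := by simp [hgdef, hx]
        have ht0 : t w = 0 := by simp [htdef, f, hx]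
        rw [hg0, ht0, hbdef]
        simp
        positivity
    have hbsum : Summable b := (((hsqsum (ξ x)).add (hsqsum (ξ y))).mul_left _)
    have habsum : Summable fun w => |g w - t w| :=
      Summable.of_nonneg_of_le (fun w => abs_nonneg _) hterm hbsum
    have hdiffsum : Summable fun w => g w - t w := hgsum.sub htsum
    have hsecond : |∑' w, g w - ∑' w, t w| ≤ ε1 ^ 2 / 2 := by
      rw [← Summable.tsum_sub hgsum htsum]
      have h1 : |∑' w, (g w - t w)| ≤ ∑' w, |g w - t w| := by
        have := norm_tsum_le_tsum_norm (f := fun w => g w - t w)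
          (by simpa [Real.norm_eq_abs] using habsum)
        simpa [Real.norm_eq_abs] using this
      have h2 : ∑' w, |g w - t w| ≤ ∑' w, b w := Summable.tsum_le_tsum hterm habsum hbsum
      have h3 : ∑' w, b w = ε1 ^ 2 / 2 := by
        rw [hbdef, tsum_mul_left, Summable.tsum_add (hsqsum (ξ x)) (hsqsum (ξ y)),
          hsq (ξ x), hsq (ξ y), hξnorm x, hξnorm y]
        ring
      linarith
    have hone : (1:ℝ) - (inner ℝ (α x) (α y) : ℝ)
        = (1 - (inner ℝ (ξ x) (ξ y) : ℝ)) + (∑' w, g w - ∑' w, t w) := by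
      rw [hinnerα, hinnerξ]; ring
    calc |1 - (inner ℝ (α x) (α y) : ℝ)|
        ≤ |1 - (inner ℝ (ξ x) (ξ y) : ℝ)| + |∑' w, g w - ∑' w, t w| := by
          rw [hone]; exact abs_add_le _ _
      _ ≤ ε1 ^ 2 / 2 + ε1 ^ 2 / 2 := by
          refine add_le_add ?_ hsecond
          rw [abs_of_nonneg hfirst.1]; exact hfirst.2
      _ = ε / 4 := by rw [hε1sq]; ring
      _ < ε := by linarith
  exact ⟨lp (fun _ : Σ i, Y i => H) 2, inferInstance, inferInstance, α, 2 * S1 + S2,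
    by positivity, hαnorm, hclose, horth⟩

end
end
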